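/- (Non-conservation of H¹ norm for the conservative weak two-peakon solution.) Let x₁(t) < x₂(t) evolve by ẋ₁ = (2/3)m₁² + 2m₁m₂e^{x₁−x₂}, ẋ₂ = (2/3)m₂² + 2m₁m₂e^{x₁−x₂} with positive constants m₁ ≠ m₂. Then the function H(t) = 2(m₁² + m₂²) + 4m₁m₂e^{x₁(t)−x₂(t)} satisfies dH/dt = (8/3)m₁m₂(m₁² − m₂²)e^{x₁−x₂} ≠ 0. -/

import Mathlib

open Real

/-- Non-conservation of the `H¹` norm for the conservative weak two-peakon solution:
`dH/dt = (8/3) m₁ m₂ (m₁² - m₂²) e^{x₁ - x₂} ≠ 0` when `m₁ ≠ m₂` are positive. -/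
theorem two_peakon_weak_H1_not_conserved
    (m₁ m₂ : ℝ) (hm₁ : 0 < m₁) (hm₂ : 0 < m₂) (hne : m₁ ≠ m₂)
    (I : Set ℝ) (x₁ x₂ : ℝ → ℝ)
    (hord : ∀ t ∈ I, x₁ t < x₂ t)
    (h₁ : ∀ t ∈ I, HasDerivWithinAt x₁
      ((2 / 3) * m₁ ^ 2 + 2 * m₁ * m₂ * Real.exp (x₁ t - x₂ t)) I t)
    (h₂ : ∀ t ∈ I, HasDerivWithinAt x₂
      ((2 / 3) * m₂ ^ 2 + 2 * m₁ * m₂ * Real.exp (x₁ t - x₂ t)) I t) :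
    ∀ t ∈ I,
      HasDerivWithinAt (fun t => 2 * (m₁ ^ 2 + m₂ ^ 2)
          + 4 * m₁ * m₂ * Real.exp (x₁ t - x₂ t))
        ((8 / 3) * m₁ * m₂ * (m₁ ^ 2 - m₂ ^ 2) * Real.exp (x₁ t - x₂ t)) I t ∧
      (8 / 3) * m₁ * m₂ * (m₁ ^ 2 - m₂ ^ 2) * Real.exp (x₁ t - x₂ t) ≠ 0 := by
  intro t ht
  constructor
  · have hu : HasDerivWithinAt (fun t => x₁ t - x₂ t)
        ((2 / 3) * m₁ ^ 2 - (2 / 3) * m₂ ^ 2) I t := by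
      have := (h₁ t ht).sub (h₂ t ht)
      exact this.congr_deriv (by ring)
    have hexp := (Real.hasDerivAt_exp (x₁ t - x₂ t)).comp_hasDerivWithinAt t hu
    have := (hasDerivWithinAt_const t I (2 * (m₁ ^ 2 + m₂ ^ 2))).add
      (hexp.const_mul (4 * m₁ * m₂))
    exact this.congr_deriv (by ring)
  · have he := Real.exp_pos (x₁ t - x₂ t)
    have hsq : m₁ ^ 2 - m₂ ^ 2 ≠ 0 := by
      have : m₁ ^ 2 ≠ m₂ ^ 2 := fun h => hne (by nlinarith)
      intro h; apply this; linarith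
    positivity
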